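/- For fixed even prime power q, the limit as n → ∞ of i_Sp(2n,q)/q^{n^2+n} equals ∏_{i≥1}(1 + q^{-2i}), where i_Sp(2n,q) is defined by the formula i_Sp(2n,q) = ∑_{r even, 0≤r≤n} |Sp(2n,q)|/A_r + ∑_{r even, 2≤r≤n} |Sp(2n,q)|/B_r + ∑_{r odd, 1≤r≤n} |Sp(2n,q)|/C_r with A_r = q^{r(r+1)/2 + r(2n-2r)} |Sp(r,q)| |Sp(2n-2r,q)|, B_r = q^{r(r+1)/2 + r(2n-2r)+r-1} |Sp(r-2,q)| |Sp(2n-2r,q)|, C_r = q^{r(r+1)/2 + r(2n-2r)} |Sp(r-1,q)| |Sp(2n-2r,q)|. -/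

import Mathlib

open Finset Filter Real

noncomputable def spOrder (q : ℝ) (m : ℕ) : ℝ :=
  q ^ (m ^ 2) * ∏ i ∈ Finset.range m, (q ^ (2 * (i + 1)) - 1)

namespace SpAux

/-- partial product ∏_{i<m} (1 - y^{2(i+1)}) -/
noncomputable def P (y : ℝ) (m : ℕ) : ℝ := ∏ i ∈ Finset.range m, (1 - y ^ (2 * (i + 1)))

variable {y : ℝ} (hy : 0 < y) (hy2 : y ≤ 1/2)
include hy hy2

lemma factor_mem (i : ℕ) : 2/3 ≤ 1 - y ^ (2 * (i + 1)) ∧ 1 - y ^ (2 * (i + 1)) ≤ 1 := by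
  constructor
  · have h1 : y ^ (2 * (i + 1)) ≤ y ^ 2 := by
      apply pow_le_pow_of_le_one hy.le (by linarith) (by omega)
    have h2 : y ^ 2 ≤ (1/2 : ℝ) ^ 2 := by
      apply pow_le_pow_left₀ hy.le hy2
    nlinarith
  · nlinarith [pow_pos hy (2 * (i + 1))]

lemma P_le_one (m : ℕ) : P y m ≤ 1 := by
  have := factor_mem hy hy2
  calc P y m ≤ ∏ i ∈ Finset.range m, 1 := by
        apply Finset.prod_le_prod
        · intro i _; linarith [(this i).1]
        · intro i _; exact (this i).2
    _ = 1 := by simp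

lemma P_pos (m : ℕ) : 0 < P y m := by
  apply Finset.prod_pos
  intro i _
  linarith [(factor_mem hy hy2 i).1]

lemma sum_pow_le (m : ℕ) : ∑ i ∈ Finset.range m, y ^ (2 * (i + 1)) ≤ 1/3 := by
  have h4 : ∀ i : ℕ, y ^ (2 * (i + 1)) ≤ (1/4 : ℝ) ^ (i + 1) := by
    intro i
    have : y ^ (2 * (i + 1)) = (y ^ 2) ^ (i + 1) := by rw [← pow_mul]
    rw [this]
    apply pow_le_pow_left₀ (by positivity)
    nlinarith
  calc ∑ i ∈ Finset.range m, y ^ (2 * (i + 1))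
      ≤ ∑ i ∈ Finset.range m, (1/4 : ℝ) ^ (i + 1) := Finset.sum_le_sum fun i _ => h4 i
    _ ≤ 1/3 := by
        have : ∀ m : ℕ, ∑ i ∈ Finset.range m, (1/4 : ℝ) ^ (i + 1) = (1 - (1/4)^m)/3 := by
          intro m
          induction m with
          | zero => simp
          | succ k ih => rw [Finset.sum_range_succ, ih]; ring
        rw [this]
        have : (0:ℝ) ≤ (1/4 : ℝ)^m := by positivity
        linarith

lemma P_ge (m : ℕ) : 2/3 ≤ P y m := by
  have key : ∀ m : ℕ, 1 - ∑ i ∈ Finset.range m, y ^ (2 * (i + 1)) ≤ P y m := by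
    intro m
    induction m with
    | zero => simp [P]
    | succ k ih =>
      rw [Finset.sum_range_succ]
      unfold P
      rw [Finset.prod_range_succ]
      have hP1 : P y k ≤ 1 := P_le_one hy hy2 k
      have hP0 : 0 < P y k := P_pos hy hy2 k
      have ha : 0 < y ^ (2 * (k + 1)) := pow_pos hy _
      unfold P at ih hP1 hP0
      nlinarith
  linarith [key m, sum_pow_le hy hy2 m]

lemma P_antitone : Antitone (P y) := by
  apply antitone_nat_of_succ_le
  intro m
  unfold P
  rw [Finset.prod_range_succ]
  have hP0 : 0 < P y m := P_pos hy hy2 m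
  unfold P at hP0
  nlinarith [(factor_mem hy hy2 m).1, pow_pos hy (2 * (m+1))]

noncomputable def Pinf (y : ℝ) : ℝ := ⨅ m, P y m

lemma P_tendsto : Filter.Tendsto (P y) Filter.atTop (nhds (Pinf y)) := by
  apply tendsto_atTop_ciInf (P_antitone hy hy2)
  exact ⟨2/3, by rintro x ⟨m, rfl⟩; exact P_ge hy hy2 m⟩

lemma Pinf_ge : 2/3 ≤ Pinf y :=
  le_ciInf fun m => P_ge hy hy2 m

lemma Pinf_le (m : ℕ) : Pinf y ≤ P y m :=
  ciInf_le ⟨2/3, by rintro x ⟨m, rfl⟩; exact P_ge hy hy2 m⟩ m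







omit hy hy2 in
lemma spOrder_eq {q : ℝ} (hq : 0 < q) (m : ℕ) :
    spOrder q m = q ^ (2 * m ^ 2 + m) * P q⁻¹ m := by
  have hfac : ∀ i : ℕ, q ^ (2 * (i + 1)) - 1 = q ^ (2 * (i + 1)) * (1 - q⁻¹ ^ (2 * (i + 1))) := by
    intro i
    have : q ^ (2 * (i + 1)) * q⁻¹ ^ (2 * (i + 1)) = 1 := by
      rw [← mul_pow, mul_inv_cancel₀ hq.ne', one_pow]
    ring_nf
    ring_nf at this
    nlinarith [this]
  unfold spOrder P
  rw [Finset.prod_congr rfl fun i _ => hfac i, Finset.prod_mul_distrib,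
    Finset.prod_pow_eq_pow_sum]
  have hsum : ∑ i ∈ Finset.range m, 2 * (i + 1) = m ^ 2 + m := by
    induction m with
    | zero => simp
    | succ k ih => rw [Finset.sum_range_succ, ih]; ring
  rw [hsum, ← mul_assoc, ← pow_add]
  congr 2
  ring

omit hy hy2 in
lemma key {q : ℝ} (hq : 2 ≤ q) (e k n m1 m2 : ℕ)
    (h : 2 * n ^ 2 + n + k = e + (2 * m1 ^ 2 + m1) + (2 * m2 ^ 2 + m2) + (n ^ 2 + n)) :
    spOrder q n / (q ^ e * spOrder q m1 * spOrder q m2) =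
      q ^ (n ^ 2 + n) * (q⁻¹ ^ k * (P q⁻¹ n / (P q⁻¹ m1 * P q⁻¹ m2))) := by
  have hq0 : (0:ℝ) < q := by linarith
  have hy : (0:ℝ) < q⁻¹ := by positivity
  have hy2 : q⁻¹ ≤ 1/2 := by
    rw [inv_le_comm₀ hq0 (by norm_num)]
    linarith
  have hP1 := P_pos hy hy2 m1
  have hP2 := P_pos hy hy2 m2
  rw [spOrder_eq hq0, spOrder_eq hq0, spOrder_eq hq0]
  rw [inv_pow]
  have hR : q ^ (n ^ 2 + n) * ((q ^ k)⁻¹ * (P q⁻¹ n / (P q⁻¹ m1 * P q⁻¹ m2))) =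
      (q ^ (n ^ 2 + n) * P q⁻¹ n) / (q ^ k * (P q⁻¹ m1 * P q⁻¹ m2)) := by ring
  rw [hR, div_eq_div_iff (by positivity) (by positivity)]
  have hpow : (q:ℝ) ^ (2 * n ^ 2 + n) * q ^ k =
      q ^ (n ^ 2 + n) * (q ^ e * (q ^ (2 * m1 ^ 2 + m1) * q ^ (2 * m2 ^ 2 + m2))) := by
    rw [← pow_add, ← pow_add, ← pow_add, ← pow_add]
    congr 1
    linarith
  linear_combination (P q⁻¹ n * P q⁻¹ m1 * P q⁻¹ m2) * hpow


omit hy hy2 in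
lemma elemA {q : ℝ} (hq : 2 ≤ q) {n r : ℕ} (hr : Even r) (hrn : r ≤ n) :
    spOrder q n / (q ^ (r * (r + 1) / 2 + r * (2 * n - 2 * r)) * spOrder q (r / 2) *
        spOrder q (n - r)) =
      q ^ (n ^ 2 + n) * (q⁻¹ ^ ((n - r) * (n - r + 1) + r) *
        (P q⁻¹ n / (P q⁻¹ (r / 2) * P q⁻¹ (n - r)))) := by
  obtain ⟨s, rfl⟩ := hr
  obtain ⟨t, rfl⟩ : ∃ t, n = s + s + t := ⟨n - (s + s), by omega⟩
  have h1 : s + s + t - (s + s) = t := by omega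
  have h2 : 2 * (s + s + t) - 2 * (s + s) = 2 * t := by omega
  have h3 : (s + s) / 2 = s := by omega
  have h4 : (s + s) * (s + s + 1) / 2 = s * (2 * s + 1) := by
    rw [show (s + s) * (s + s + 1) = 2 * (s * (2 * s + 1)) by ring]
    exact Nat.mul_div_cancel_left _ (by norm_num)
  rw [h1, h2, h3, h4]
  exact key hq _ _ _ _ _ (by ring)

omit hy hy2 in
lemma elemB {q : ℝ} (hq : 2 ≤ q) {n r : ℕ} (hr : Even r) (h1r : 1 ≤ r) (hrn : r ≤ n) :
    spOrder q n / (q ^ (r * (r + 1) / 2 + r * (2 * n - 2 * r) + r - 1) *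
        spOrder q (r / 2 - 1) * spOrder q (n - r)) =
      q ^ (n ^ 2 + n) * (q⁻¹ ^ ((n - r) * (n - r + 1)) *
        (P q⁻¹ n / (P q⁻¹ (r / 2 - 1) * P q⁻¹ (n - r)))) := by
  obtain ⟨s, rfl⟩ := hr
  obtain ⟨u, rfl⟩ : ∃ u, s = u + 1 := ⟨s - 1, by omega⟩
  obtain ⟨t, rfl⟩ : ∃ t, n = (u + 1) + (u + 1) + t := ⟨n - ((u + 1) + (u + 1)), by omega⟩
  have h1 : (u + 1) + (u + 1) + t - ((u + 1) + (u + 1)) = t := by omega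
  have h2 : 2 * ((u + 1) + (u + 1) + t) - 2 * ((u + 1) + (u + 1)) = 2 * t := by omega
  have h3 : ((u + 1) + (u + 1)) / 2 - 1 = u := by omega
  have h4 : ((u + 1) + (u + 1)) * ((u + 1) + (u + 1) + 1) / 2 = (u + 1) * (2 * u + 3) := by
    rw [show ((u + 1) + (u + 1)) * ((u + 1) + (u + 1) + 1) = 2 * ((u + 1) * (2 * u + 3)) by ring]
    exact Nat.mul_div_cancel_left _ (by norm_num)
  rw [h1, h2, h3, h4]
  rw [show (u + 1) * (2 * u + 3) + ((u + 1) + (u + 1)) * (2 * t) + ((u + 1) + (u + 1)) - 1 =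
      2 * u ^ 2 + 7 * u + 4 * u * t + 4 * t + 4 from by
    rw [show (u + 1) * (2 * u + 3) + ((u + 1) + (u + 1)) * (2 * t) + ((u + 1) + (u + 1)) =
        (2 * u ^ 2 + 7 * u + 4 * u * t + 4 * t + 4) + 1 by ring]
    simp]
  exact key hq _ _ _ _ _ (by ring)

omit hy hy2 in
lemma elemC {q : ℝ} (hq : 2 ≤ q) {n r : ℕ} (hr : Odd r) (hrn : r ≤ n) :
    spOrder q n / (q ^ (r * (r + 1) / 2 + r * (2 * n - 2 * r)) *
        spOrder q ((r - 1) / 2) * spOrder q (n - r)) =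
      q ^ (n ^ 2 + n) * (q⁻¹ ^ ((n - r) * (n - r + 1)) *
        (P q⁻¹ n / (P q⁻¹ ((r - 1) / 2) * P q⁻¹ (n - r)))) := by
  obtain ⟨u, rfl⟩ := hr
  obtain ⟨t, rfl⟩ : ∃ t, n = 2 * u + 1 + t := ⟨n - (2 * u + 1), by omega⟩
  have h1 : 2 * u + 1 + t - (2 * u + 1) = t := by omega
  have h2 : 2 * (2 * u + 1 + t) - 2 * (2 * u + 1) = 2 * t := by omega
  have h3 : (2 * u + 1 - 1) / 2 = u := by omega
  have h4 : (2 * u + 1) * (2 * u + 1 + 1) / 2 = (2 * u + 1) * (u + 1) := by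
    rw [show (2 * u + 1) * (2 * u + 1 + 1) = 2 * ((2 * u + 1) * (u + 1)) by ring]
    exact Nat.mul_div_cancel_left _ (by norm_num)
  rw [h1, h2, h3, h4]
  exact key hq _ _ _ _ _ (by ring)


/-- `g t = y^{t(t+1)} / P y t`. -/
noncomputable def gg (y : ℝ) (t : ℕ) : ℝ := y ^ (t * (t + 1)) * (P y t)⁻¹

noncomputable def aa (y : ℝ) (N t : ℕ) : ℝ := y ^ (2 * N * t) * gg y t

noncomputable def sN (y : ℝ) (N : ℕ) : ℝ := ∑' t, aa y N t

lemma Pinv_le : ∀ m, (P y m)⁻¹ ≤ 3 / 2 := by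
  intro m
  rw [inv_le_comm₀ (P_pos hy hy2 m) (by norm_num)]
  have := P_ge hy hy2 m
  linarith

lemma gg_nonneg (t : ℕ) : 0 ≤ gg y t := by
  have := P_pos hy hy2 t
  unfold gg
  positivity

lemma gg_le (t : ℕ) : gg y t ≤ 3 / 2 * y ^ t := by
  unfold gg
  have h1 : y ^ (t * (t + 1)) ≤ y ^ t := by
    apply pow_le_pow_of_le_one hy.le (by linarith) (by nlinarith)
  have h2 := Pinv_le hy hy2 t
  have h3 : (0:ℝ) < (P y t)⁻¹ := inv_pos.mpr (P_pos hy hy2 t)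
  have h4 : (0:ℝ) ≤ y ^ t := pow_nonneg hy.le t
  have h5 : (0:ℝ) ≤ y ^ (t * (t + 1)) := pow_nonneg hy.le _
  calc y ^ (t * (t + 1)) * (P y t)⁻¹ ≤ y ^ (t * (t + 1)) * (3 / 2) :=
        mul_le_mul_of_nonneg_left h2 h5
    _ ≤ 3 / 2 * y ^ t := by nlinarith

lemma y_lt_one : y < 1 := by linarith

lemma summable_geom_mul (c : ℝ) : Summable (fun t : ℕ => c * y ^ t) :=
  (summable_geometric_of_lt_one hy.le (y_lt_one hy hy2)).mul_left c

lemma aa_nonneg (N t : ℕ) : 0 ≤ aa y N t := by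
  have := gg_nonneg hy hy2 t
  unfold aa
  positivity

lemma aa_le (N t : ℕ) : aa y N t ≤ 3 / 2 * y ^ t := by
  have h1 : y ^ (2 * N * t) ≤ 1 := pow_le_one₀ hy.le (by linarith)
  have h2 := gg_nonneg hy hy2 t
  have h3 := gg_le hy hy2 t
  calc aa y N t ≤ 1 * gg y t := by
        unfold aa; exact mul_le_mul_of_nonneg_right h1 h2
    _ ≤ 3 / 2 * y ^ t := by rw [one_mul]; exact h3

lemma summable_aa (N : ℕ) : Summable (fun t => aa y N t) :=
  Summable.of_nonneg_of_le (aa_nonneg hy hy2 N) (aa_le hy hy2 N)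
    (summable_geom_mul hy hy2 _)

omit hy hy2 in
lemma P_succ (t : ℕ) : P y (t + 1) = P y t * (1 - y ^ (2 * (t + 1))) := by
  unfold P
  rw [Finset.prod_range_succ]

lemma sN_rec (N : ℕ) : sN y N = (1 + y ^ (2 * (N + 1))) * sN y (N + 1) := by
  classical
  set b : ℕ → ℝ := fun t => if t = 0 then 0 else y ^ (2 * (N + 1)) * aa y (N + 1) (t - 1) with hb
  have hb1 : ∀ t, b (t + 1) = y ^ (2 * (N + 1)) * aa y (N + 1) t := by
    intro t; simp [hb]
  have hsb : Summable b := by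
    rw [← summable_nat_add_iff 1]
    simp only [hb1]
    exact (summable_aa hy hy2 (N + 1)).mul_left _
  have hab : ∀ t, aa y N t = aa y (N + 1) t + b t := by
    intro t
    match t with
    | 0 => simp [hb, aa, gg, P]
    | (t + 1) =>
      rw [hb1]
      have hP := P_pos hy hy2 t
      have hf : (0:ℝ) < 1 - y ^ (2 * (t + 1)) := by linarith [(factor_mem hy hy2 t).1]
      unfold aa gg
      rw [P_succ]
      field_simp
      ring
  calc sN y N = ∑' t, (aa y (N + 1) t + b t) := by unfold sN; exact tsum_congr hab
    _ = sN y (N + 1) + ∑' t, b t := by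
        rw [Summable.tsum_add (summable_aa hy hy2 (N + 1)) hsb]; rfl
    _ = sN y (N + 1) + (b 0 + ∑' t, b (t + 1)) := by rw [Summable.tsum_eq_zero_add hsb]
    _ = sN y (N + 1) + y ^ (2 * (N + 1)) * sN y (N + 1) := by
        simp only [hb1]
        rw [tsum_mul_left]
        simp [hb, sN]
    _ = (1 + y ^ (2 * (N + 1))) * sN y (N + 1) := by ring

lemma sN_prod (N : ℕ) :
    sN y 0 = (∏ i ∈ Finset.range N, (1 + y ^ (2 * (i + 1)))) * sN y N := by
  induction N with
  | zero => simp
  | succ k ih =>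
    rw [Finset.prod_range_succ, ih, sN_rec hy hy2 k]
    ring

lemma sN_tendsto : Filter.Tendsto (sN y) Filter.atTop (nhds 1) := by
  have h0 : ∀ N, aa y N 0 = 1 := by intro N; simp [aa, gg, P]
  have hsub : ∀ N, sN y N - 1 = ∑' t, aa y N (t + 1) := by
    intro N
    rw [show sN y N = aa y N 0 + ∑' t, aa y N (t + 1) from
      Summable.tsum_eq_zero_add (summable_aa hy hy2 N), h0]
    ring
  have hbound : ∀ N, |sN y N - 1| ≤ 3 / 2 * (1 - y)⁻¹ * (y ^ 2) ^ N := by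
    intro N
    rw [hsub]
    have hnn : ∀ t, 0 ≤ aa y N (t + 1) := fun t => aa_nonneg hy hy2 N (t + 1)
    have habs : |∑' t, aa y N (t + 1)| = ∑' t, aa y N (t + 1) := by
      rw [abs_of_nonneg]
      exact tsum_nonneg hnn
    rw [habs]
    have hle : ∀ t, aa y N (t + 1) ≤ (y ^ 2) ^ N * (3 / 2 * y ^ t) := by
      intro t
      have e1 : y ^ (2 * N * (t + 1)) = y ^ (2 * N) * y ^ (2 * N * t) := by
        rw [← pow_add]; congr 1; ring
      have e2 : y ^ (2 * N * t) ≤ 1 := pow_le_one₀ hy.le (by linarith)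
      have e3 : gg y (t + 1) ≤ 3 / 2 * y ^ (t + 1) := gg_le hy hy2 (t + 1)
      have e4 : gg y (t + 1) ≥ 0 := gg_nonneg hy hy2 (t + 1)
      have e5 : (3:ℝ) / 2 * y ^ (t + 1) ≤ 3 / 2 * y ^ t := by
        have : y ^ (t + 1) ≤ y ^ t := pow_le_pow_of_le_one hy.le (by linarith) (by omega)
        linarith
      calc aa y N (t + 1) = y ^ (2 * N) * y ^ (2 * N * t) * gg y (t + 1) := by
            unfold aa; rw [e1]
        _ ≤ y ^ (2 * N) * 1 * (3 / 2 * y ^ t) := by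
            apply mul_le_mul
            · exact mul_le_mul_of_nonneg_left e2 (pow_nonneg hy.le _)
            · exact le_trans e3 e5
            · exact e4
            · positivity
        _ = (y ^ 2) ^ N * (3 / 2 * y ^ t) := by rw [mul_one, pow_mul]
    calc (∑' t, aa y N (t + 1)) ≤ ∑' t : ℕ, (y ^ 2) ^ N * (3 / 2 * y ^ t) :=
          Summable.tsum_le_tsum hle ((summable_nat_add_iff 1).2 (summable_aa hy hy2 N))
            (((summable_geom_mul hy hy2 (3/2))).mul_left _)
      _ = (y ^ 2) ^ N * (3 / 2 * ∑' t : ℕ, y ^ t) := by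
          rw [tsum_mul_left, tsum_mul_left]
      _ ≤ 3 / 2 * (1 - y)⁻¹ * (y ^ 2) ^ N := by
          rw [tsum_geometric_of_lt_one hy.le (y_lt_one hy hy2)]
          ring_nf
          exact le_refl _
  have hzero : Filter.Tendsto (fun N => sN y N - 1) Filter.atTop (nhds 0) := by
    apply squeeze_zero_norm hbound
    have : Filter.Tendsto (fun N : ℕ => (y ^ 2) ^ N) Filter.atTop (nhds 0) := by
      apply tendsto_pow_atTop_nhds_zero_of_lt_one (by positivity)
      nlinarith [y_lt_one hy hy2]
    have := this.const_mul (3 / 2 * (1 - y)⁻¹)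
    simpa using this
  have := hzero.add_const 1
  simpa using this

lemma hasProd_target :
    HasProd (fun i : ℕ => 1 + y ^ (2 * (i + 1)))
      (Real.exp (∑' i : ℕ, Real.log (1 + y ^ (2 * (i + 1))))) := by
  have hpos : ∀ i : ℕ, (0:ℝ) < 1 + y ^ (2 * (i + 1)) := by
    intro i; positivity
  have hsum : Summable (fun i : ℕ => Real.log (1 + y ^ (2 * (i + 1)))) := by
    apply Summable.of_nonneg_of_le
      (fun i => Real.log_nonneg (by nlinarith [pow_nonneg hy.le (2 * (i + 1))]))
      (fun i => ?_) (summable_geom_mul hy hy2 1)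
    have h1 : Real.log (1 + y ^ (2 * (i + 1))) ≤ y ^ (2 * (i + 1)) := by
      have := Real.log_le_sub_one_of_pos (hpos i)
      linarith
    have h2 : y ^ (2 * (i + 1)) ≤ y ^ i := by
      apply pow_le_pow_of_le_one hy.le (by linarith) (by omega)
    rw [one_mul]
    linarith
  have := hsum.hasSum.rexp
  convert this using 1
  funext i
  simp only [Function.comp_apply]
  rw [Real.exp_log (hpos i)]

lemma euler : (∑' t, gg y t) = ∏' i : ℕ, (1 + y ^ (2 * (i + 1))) := by
  have hp := hasProd_target hy hy2
  have hmult : Multipliable (fun i : ℕ => 1 + y ^ (2 * (i + 1))) := ⟨_, hp⟩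
  have hp' := hmult.hasProd.tendsto_prod_nat
  have h1 : Filter.Tendsto
      (fun N => (∏ i ∈ Finset.range N, (1 + y ^ (2 * (i + 1)))) * sN y N)
      Filter.atTop (nhds ((∏' i : ℕ, (1 + y ^ (2 * (i + 1)))) * 1)) :=
    hp'.mul (sN_tendsto hy hy2)
  have h2 : Filter.Tendsto
      (fun _ : ℕ => sN y 0) Filter.atTop
        (nhds ((∏' i : ℕ, (1 + y ^ (2 * (i + 1)))) * 1)) := by
    apply Filter.Tendsto.congr _ h1
    intro N
    exact (sN_prod hy hy2 N).symm
  have h3 : sN y 0 = (∏' i : ℕ, (1 + y ^ (2 * (i + 1)))) * 1 :=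
    tendsto_nhds_unique tendsto_const_nhds h2
  have h4 : sN y 0 = ∑' t, gg y t := by
    unfold sN
    apply tsum_congr
    intro t
    simp [aa]
  rw [← h4, h3, mul_one]


noncomputable def v (y : ℝ) (n t : ℕ) : ℝ :=
  y ^ (t * (t + 1)) * (P y n / (P y ((n - t + 1) / 2 - 1) * P y t))

noncomputable def u (y : ℝ) (n t : ℕ) : ℝ := if t < n then v y n t else 0

lemma v_nonneg (n t : ℕ) : 0 ≤ v y n t := by
  have h1 := P_pos hy hy2 n
  have h2 := P_pos hy hy2 ((n - t + 1) / 2 - 1)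
  have h3 := P_pos hy hy2 t
  unfold v
  positivity

lemma v_le (n t : ℕ) : v y n t ≤ 9 / 4 * y ^ t := by
  have h1 := P_le_one hy hy2 n
  have h1' := P_pos hy hy2 n
  have h2 := P_pos hy hy2 ((n - t + 1) / 2 - 1)
  have h3 := P_pos hy hy2 t
  have h2' := Pinv_le hy hy2 ((n - t + 1) / 2 - 1)
  have h3' := Pinv_le hy hy2 t
  have hyt : y ^ (t * (t + 1)) ≤ y ^ t :=
    pow_le_pow_of_le_one hy.le (by linarith) (by nlinarith)
  have hfrac : P y n / (P y ((n - t + 1) / 2 - 1) * P y t) ≤ 9 / 4 := by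
    rw [div_le_iff₀ (by positivity)]
    have e1 : (P y ((n - t + 1) / 2 - 1))⁻¹ * (P y t)⁻¹ ≤ 3 / 2 * (3 / 2) := by
      apply mul_le_mul h2' h3' (by positivity) (by norm_num)
    have e2 : (1:ℝ) ≤ 9 / 4 * (P y ((n - t + 1) / 2 - 1) * P y t) := by
      rw [show (9:ℝ)/4 = (3/2) * (3/2) by norm_num]
      have := mul_le_mul (inv_le_comm₀ h2 (by norm_num) |>.mp h2')
        (inv_le_comm₀ h3 (by norm_num) |>.mp h3') (by positivity) (by positivity)
      nlinarith
    linarith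
  have hnn : (0:ℝ) ≤ P y n / (P y ((n - t + 1) / 2 - 1) * P y t) := by positivity
  calc v y n t ≤ y ^ t * (P y n / (P y ((n - t + 1) / 2 - 1) * P y t)) := by
        unfold v
        exact mul_le_mul_of_nonneg_right hyt hnn
    _ ≤ y ^ t * (9 / 4) := mul_le_mul_of_nonneg_left hfrac (pow_nonneg hy.le t)
    _ = 9 / 4 * y ^ t := by ring

lemma u_nonneg (n t : ℕ) : 0 ≤ u y n t := by
  unfold u
  split
  · exact v_nonneg hy hy2 n t
  · exact le_refl 0

lemma u_le (n t : ℕ) : u y n t ≤ 9 / 4 * y ^ t := by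
  unfold u
  split
  · exact v_le hy hy2 n t
  · positivity

omit hy hy2 in
lemma sum_v_eq_tsum_u (n : ℕ) : ∑ t ∈ Finset.range n, v y n t = ∑' t, u y n t := by
  rw [tsum_eq_sum (s := Finset.range n) (f := fun t => u y n t)
    (fun t ht => by simp only [u]; rw [if_neg]; simpa using ht)]
  apply Finset.sum_congr rfl
  intro t ht
  simp only [u]
  rw [if_pos (Finset.mem_range.mp ht)]

lemma u_tendsto (t : ℕ) :
    Filter.Tendsto (fun n => u y n t) Filter.atTop (nhds (gg y t)) := by
  have hσ : Filter.Tendsto (fun n : ℕ => (n - t + 1) / 2 - 1) Filter.atTop Filter.atTop := by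
    apply Filter.tendsto_atTop_atTop.2
    intro b
    exact ⟨2 * b + t + 2, fun n hn => by omega⟩
  have hPn := P_tendsto hy hy2
  have hPσ : Filter.Tendsto (fun n : ℕ => P y ((n - t + 1) / 2 - 1)) Filter.atTop
      (nhds (Pinf y)) := hPn.comp hσ
  have hPinf : Pinf y ≠ 0 := by have := Pinf_ge hy hy2; linarith
  have hPt := P_pos hy hy2 t
  have hlim : Filter.Tendsto (fun n : ℕ => y ^ (t * (t + 1)) *
      (P y n / (P y ((n - t + 1) / 2 - 1) * P y t))) Filter.atTop
      (nhds (y ^ (t * (t + 1)) * (Pinf y / (Pinf y * P y t)))) := by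
    apply Filter.Tendsto.const_mul
    apply Filter.Tendsto.div hPn (hPσ.mul tendsto_const_nhds)
    exact mul_ne_zero hPinf hPt.ne'
  have heq : y ^ (t * (t + 1)) * (Pinf y / (Pinf y * P y t)) = gg y t := by
    unfold gg
    rw [div_mul_eq_div_div, div_self hPinf, one_div]
  rw [heq] at hlim
  refine Filter.Tendsto.congr' ?_ hlim
  filter_upwards [Filter.eventually_ge_atTop (t + 1)] with n hn
  simp only [u, v]
  rw [if_pos (by omega)]


lemma Pfrac_nonneg (a b c : ℕ) : 0 ≤ P y a / (P y b * P y c) := by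
  have h1 := P_pos hy hy2 a
  have h2 := P_pos hy hy2 b
  have h3 := P_pos hy hy2 c
  positivity

lemma Pfrac_le (a b c : ℕ) : P y a / (P y b * P y c) ≤ 9 / 4 := by
  have h1 := P_le_one hy hy2 a
  have h1' := P_pos hy hy2 a
  have h2 := P_pos hy hy2 b
  have h3 := P_pos hy hy2 c
  have h2' := P_ge hy hy2 b
  have h3' := P_ge hy hy2 c
  rw [div_le_iff₀ (by positivity)]
  nlinarith

lemma W_tendsto :
    Filter.Tendsto (fun n => ∑ t ∈ Finset.range n, v y n t) Filter.atTop
      (nhds (∑' t, gg y t)) := by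
  have h := tendsto_tsum_of_dominated_convergence (𝓕 := Filter.atTop)
    (f := fun n t => u y n t) (g := gg y) (bound := fun t => 9 / 4 * y ^ t)
    (summable_geom_mul hy hy2 (9 / 4)) (u_tendsto hy hy2) ?_
  · exact h.congr fun n => (sum_v_eq_tsum_u n).symm
  · filter_upwards with n t
    rw [Real.norm_eq_abs, abs_of_nonneg (u_nonneg hy hy2 n t)]
    exact u_le hy hy2 n t

omit hy hy2 in
lemma master {q : ℝ} (hq : 2 ≤ q) :
    Filter.Tendsto
      (fun n : ℕ =>
        ((∑ r ∈ (Finset.range (n + 1)).filter (fun r => Even r),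
            spOrder q n / (q ^ (r * (r + 1) / 2 + r * (2 * n - 2 * r)) *
              spOrder q (r / 2) * spOrder q (n - r)))
          + (∑ r ∈ (Finset.range (n + 1)).filter (fun r => Even r ∧ 1 ≤ r),
            spOrder q n / (q ^ (r * (r + 1) / 2 + r * (2 * n - 2 * r) + r - 1) *
              spOrder q (r / 2 - 1) * spOrder q (n - r)))
          + (∑ r ∈ (Finset.range (n + 1)).filter (fun r => Odd r),
            spOrder q n / (q ^ (r * (r + 1) / 2 + r * (2 * n - 2 * r)) *
              spOrder q ((r - 1) / 2) * spOrder q (n - r)))) / q ^ (n ^ 2 + n))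
      Filter.atTop
      (nhds (∏' i : ℕ, (1 + q⁻¹ ^ (2 * (i + 1))))) := by
  have hq0 : (0:ℝ) < q := by linarith
  have hy : (0:ℝ) < q⁻¹ := inv_pos.mpr hq0
  have hy2 : q⁻¹ ≤ 1 / 2 := by
    rw [inv_le_comm₀ hq0 (by norm_num)]
    linarith
  set y : ℝ := q⁻¹ with hydef
  set A : ℕ → ℝ := fun n => ∑ r ∈ (Finset.range (n + 1)).filter (fun r => Even r),
      y ^ ((n - r) * (n - r + 1) + r) * (P y n / (P y (r / 2) * P y (n - r))) with hA
  have hqpow : ∀ n : ℕ, (q : ℝ) ^ (n ^ 2 + n) ≠ 0 := fun n => pow_ne_zero _ hq0.ne'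
  have hsplit : ∀ n : ℕ,
      ((∑ r ∈ (Finset.range (n + 1)).filter (fun r => Even r),
            spOrder q n / (q ^ (r * (r + 1) / 2 + r * (2 * n - 2 * r)) *
              spOrder q (r / 2) * spOrder q (n - r)))
          + (∑ r ∈ (Finset.range (n + 1)).filter (fun r => Even r ∧ 1 ≤ r),
            spOrder q n / (q ^ (r * (r + 1) / 2 + r * (2 * n - 2 * r) + r - 1) *
              spOrder q (r / 2 - 1) * spOrder q (n - r)))
          + (∑ r ∈ (Finset.range (n + 1)).filter (fun r => Odd r),
            spOrder q n / (q ^ (r * (r + 1) / 2 + r * (2 * n - 2 * r)) *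
              spOrder q ((r - 1) / 2) * spOrder q (n - r)))) / q ^ (n ^ 2 + n)
      = A n + ∑ t ∈ Finset.range n, v y n t := by
    intro n
    rw [add_div, add_div]
    have hpartA : (∑ r ∈ (Finset.range (n + 1)).filter (fun r => Even r),
        spOrder q n / (q ^ (r * (r + 1) / 2 + r * (2 * n - 2 * r)) *
          spOrder q (r / 2) * spOrder q (n - r))) / q ^ (n ^ 2 + n) = A n := by
      rw [hA, Finset.sum_div]
      refine Finset.sum_congr rfl fun r hr => ?_
      simp only [Finset.mem_filter, Finset.mem_range] at hr
      rw [elemA hq hr.2 (by omega), mul_div_cancel_left₀ _ (hqpow n)]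
    have hpartB : (∑ r ∈ (Finset.range (n + 1)).filter (fun r => Even r ∧ 1 ≤ r),
        spOrder q n / (q ^ (r * (r + 1) / 2 + r * (2 * n - 2 * r) + r - 1) *
          spOrder q (r / 2 - 1) * spOrder q (n - r))) / q ^ (n ^ 2 + n)
        = ∑ t ∈ (Finset.range n).filter (fun t => Even (n - t)), v y n t := by
      rw [Finset.sum_div]
      refine Finset.sum_nbij' (i := fun r => n - r) (j := fun t => n - t) ?_ ?_ ?_ ?_ ?_
      · intro r hr
        simp only [Finset.mem_filter, Finset.mem_range, Nat.even_iff] at hr ⊢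
        omega
      · intro t ht
        simp only [Finset.mem_filter, Finset.mem_range, Nat.even_iff] at ht ⊢
        omega
      · intro r hr
        simp only [Finset.mem_filter, Finset.mem_range] at hr
        omega
      · intro t ht
        simp only [Finset.mem_filter, Finset.mem_range] at ht
        omega
      · intro r hr
        simp only [Finset.mem_filter, Finset.mem_range] at hr
        rw [elemB hq hr.2.1 hr.2.2 (by omega), mul_div_cancel_left₀ _ (hqpow n)]
        have hmod : r % 2 = 0 := Nat.even_iff.mp hr.2.1
        unfold v
        rw [show (n - (n - r) + 1) / 2 - 1 = r / 2 - 1 by omega]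
    have hpartC : (∑ r ∈ (Finset.range (n + 1)).filter (fun r => Odd r),
        spOrder q n / (q ^ (r * (r + 1) / 2 + r * (2 * n - 2 * r)) *
          spOrder q ((r - 1) / 2) * spOrder q (n - r))) / q ^ (n ^ 2 + n)
        = ∑ t ∈ (Finset.range n).filter (fun t => ¬ Even (n - t)), v y n t := by
      rw [Finset.sum_div]
      refine Finset.sum_nbij' (i := fun r => n - r) (j := fun t => n - t) ?_ ?_ ?_ ?_ ?_
      · intro r hr
        simp only [Finset.mem_filter, Finset.mem_range, Nat.odd_iff, Nat.even_iff] at hr ⊢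
        omega
      · intro t ht
        simp only [Finset.mem_filter, Finset.mem_range, Nat.odd_iff, Nat.even_iff] at ht ⊢
        omega
      · intro r hr
        simp only [Finset.mem_filter, Finset.mem_range, Nat.odd_iff] at hr
        omega
      · intro t ht
        simp only [Finset.mem_filter, Finset.mem_range, Nat.even_iff] at ht
        omega
      · intro r hr
        simp only [Finset.mem_filter, Finset.mem_range] at hr
        rw [elemC hq hr.2 (by omega), mul_div_cancel_left₀ _ (hqpow n)]
        have hmod : r % 2 = 1 := Nat.odd_iff.mp hr.2
        unfold v
        rw [show (n - (n - r) + 1) / 2 - 1 = (r - 1) / 2 by omega]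
    rw [hpartA, hpartB, hpartC, add_assoc,
      Finset.sum_filter_add_sum_filter_not (Finset.range n) (fun t => Even (n - t)) (v y n)]
  have hA0 : ∀ n, 0 ≤ A n := by
    intro n
    rw [hA]
    apply Finset.sum_nonneg
    intro r _
    have := Pfrac_nonneg hy hy2 n (r / 2) (n - r)
    positivity
  have hAle : ∀ n : ℕ, A n ≤ ((n : ℝ) + 1) * (9 / 4 * y ^ n) := by
    intro n
    rw [hA]
    have hterm : ∀ r ∈ (Finset.range (n + 1)).filter (fun r => Even r),
        y ^ ((n - r) * (n - r + 1) + r) * (P y n / (P y (r / 2) * P y (n - r)))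
          ≤ 9 / 4 * y ^ n := by
      intro r hr
      simp only [Finset.mem_filter, Finset.mem_range] at hr
      have hexp : n ≤ (n - r) * (n - r + 1) + r := by
        have h1 : n - r ≤ (n - r) * (n - r + 1) := Nat.le_mul_of_pos_right _ (by omega)
        set X := (n - r) * (n - r + 1) with hX
        omega
      have hy1 : y ^ ((n - r) * (n - r + 1) + r) ≤ y ^ n :=
        pow_le_pow_of_le_one hy.le (by linarith) hexp
      have hf1 := Pfrac_le hy hy2 n (r / 2) (n - r)
      have hf0 := Pfrac_nonneg hy hy2 n (r / 2) (n - r)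
      calc y ^ ((n - r) * (n - r + 1) + r) * (P y n / (P y (r / 2) * P y (n - r)))
          ≤ y ^ n * (9 / 4) := by
            apply mul_le_mul hy1 hf1 hf0 (pow_nonneg hy.le n)
        _ = 9 / 4 * y ^ n := by ring
    calc (∑ r ∈ (Finset.range (n + 1)).filter (fun r => Even r),
          y ^ ((n - r) * (n - r + 1) + r) * (P y n / (P y (r / 2) * P y (n - r))))
        ≤ ((Finset.range (n + 1)).filter (fun r => Even r)).card • (9 / 4 * y ^ n) :=
          Finset.sum_le_card_nsmul _ _ _ hterm
      _ ≤ ((n : ℝ) + 1) * (9 / 4 * y ^ n) := by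
          rw [nsmul_eq_mul]
          apply mul_le_mul_of_nonneg_right _ (by positivity)
          have hcard : ((Finset.range (n + 1)).filter (fun r => Even r)).card ≤ n + 1 :=
            le_trans (Finset.card_filter_le _ _) (by simp)
          exact_mod_cast hcard
  have hgeo : Filter.Tendsto (fun n : ℕ => ((n : ℝ) + 1) * (9 / 4 * y ^ n))
      Filter.atTop (nhds 0) := by
    have hs : Summable (fun n : ℕ => ((n : ℝ) + 1) * (9 / 4 * y ^ n)) := by
      have h1 : Summable (fun n : ℕ => (n : ℝ) ^ 1 * y ^ n) :=
        summable_pow_mul_geometric_of_norm_lt_one 1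
          (by rw [Real.norm_eq_abs, abs_of_pos hy]; linarith [y_lt_one hy hy2])
      have h2 := (summable_geometric_of_lt_one hy.le (y_lt_one hy hy2))
      apply Summable.congr ((h1.mul_left (9 / 4)).add (h2.mul_left (9 / 4)))
      intro n
      ring
    exact hs.tendsto_atTop_zero
  have hAtend : Filter.Tendsto A Filter.atTop (nhds 0) :=
    squeeze_zero hA0 hAle hgeo
  have hsum := hAtend.add (W_tendsto hy hy2)
  rw [zero_add] at hsum
  have hfinal := hsum.congr (fun n => (hsplit n).symm)
  rwa [euler hy hy2] at hfinal


end SpAux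

/-- For fixed even prime power `q`, `i_Sp(2n,q)/q^{n²+n} → ∏_{i≥1}(1+q^{-2i})` as `n → ∞`,
where `i_Sp(2n,q)` is given by the stated sum over classes (here `Sp(r,q)` for even `r` is
`spOrder q (r/2)`). -/
theorem involutions_Sp_even_char_limit (q : ℕ) (hq : ∃ k : ℕ, 0 < k ∧ q = 2 ^ k) :
    Filter.Tendsto
      (fun n : ℕ =>
        ((∑ r ∈ (Finset.range (n + 1)).filter (fun r => Even r),
            spOrder q n / ((q : ℝ) ^ (r * (r + 1) / 2 + r * (2 * n - 2 * r)) *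
              spOrder q (r / 2) * spOrder q (n - r)))
          + (∑ r ∈ (Finset.range (n + 1)).filter (fun r => Even r ∧ 1 ≤ r),
            spOrder q n / ((q : ℝ) ^ (r * (r + 1) / 2 + r * (2 * n - 2 * r) + r - 1) *
              spOrder q (r / 2 - 1) * spOrder q (n - r)))
          + (∑ r ∈ (Finset.range (n + 1)).filter (fun r => Odd r),
            spOrder q n / ((q : ℝ) ^ (r * (r + 1) / 2 + r * (2 * n - 2 * r)) *
              spOrder q ((r - 1) / 2) * spOrder q (n - r)))) / (q : ℝ) ^ (n ^ 2 + n))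
      Filter.atTop
      (nhds (∏' i : ℕ, (1 + (q : ℝ) ^ (-(2 : ℤ) * ((i : ℤ) + 1))))) := by
  obtain ⟨k, hk, rfl⟩ := hq
  have hqn : 2 ≤ 2 ^ k := by
    calc 2 = 2 ^ 1 := rfl
      _ ≤ 2 ^ k := Nat.pow_le_pow_right (by norm_num) hk
  have hq2 : (2 : ℝ) ≤ ((2 ^ k : ℕ) : ℝ) := by exact_mod_cast hqn
  have hm := SpAux.master hq2
  have hprod : (∏' i : ℕ, (1 + ((2 ^ k : ℕ) : ℝ)⁻¹ ^ (2 * (i + 1)))) =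
      ∏' i : ℕ, (1 + ((2 ^ k : ℕ) : ℝ) ^ (-(2 : ℤ) * ((i : ℤ) + 1))) := by
    apply tprod_congr
    intro i
    congr 1
    rw [show (-(2 : ℤ) * ((i : ℤ) + 1)) = -((2 * (i + 1) : ℕ) : ℤ) by push_cast; ring,
      zpow_neg, zpow_natCast, ← inv_pow]
  rw [hprod] at hm
  exact hm
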